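/- Let a > 0 and A_T ∈ ℝ. Any continuously differentiable solution A on [0,T] of A' + 2A² = −a with A(T) = A_T exists only if T < (1/√(2a))·(π/2 − arctan(√(2/a)·A_T)). Equivalently, if T ≥ (1/√(2a))·(π/2 − arctan(√(2/a)·A_T)), then there is no C¹ solution of this terminal value problem on all of [0,T]. -/

import Mathlib

open Real Set

theorem stmt_2 (a T A_T : ℝ) (ha : 0 < a)
    (hT : (1 / Real.sqrt (2 * a)) * (Real.pi / 2 - Real.arctan (Real.sqrt (2 / a) * A_T)) ≤ T) :
    ¬ ∃ A : ℝ → ℝ, ContDiffOn ℝ 1 A (Set.Icc 0 T) ∧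
        (∀ t ∈ Set.Icc (0 : ℝ) T, HasDerivAt A (-a - 2 * (A t) ^ 2) t) ∧
        A T = A_T := by
  rintro ⟨A, hA, hA', hAT⟩
  set s := Real.sqrt (2 / a) with hs_def
  set c := Real.sqrt (2 * a) with hc_def
  have ha' : (0:ℝ) < 2 / a := by positivity
  have hs_pos : 0 < s := Real.sqrt_pos.mpr ha'
  have hc_pos : 0 < c := Real.sqrt_pos.mpr (by positivity)
  have hs2 : s ^ 2 = 2 / a := Real.sq_sqrt ha'.le
  have hc2 : c ^ 2 = 2 * a := Real.sq_sqrt (by positivity)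
  have hcas : c = a * s := by
    have h : (a * s) ^ 2 = c ^ 2 := by
      rw [mul_pow, hs2, hc2]; field_simp
    nlinarith [h, mul_pos ha hs_pos, hc_pos]
  have has2 : a * s ^ 2 = 2 := by
    rw [hs2]; field_simp
  -- T > 0
  have harc_lt : Real.arctan (s * A_T) < Real.pi / 2 := Real.arctan_lt_pi_div_two _
  have hT0 : 0 < T :=
    lt_of_lt_of_le (mul_pos (by positivity) (by linarith)) hT
  -- g is constant
  set g : ℝ → ℝ := fun t => Real.arctan (s * A t) + c * t with hg_def
  have hg : ∀ t ∈ Set.Icc (0:ℝ) T, HasDerivAt g 0 t := by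
    intro t ht
    have h1 : HasDerivAt (fun t => s * A t) (s * (-a - 2 * (A t) ^ 2)) t :=
      (hA' t ht).const_mul s
    have h2 := h1.arctan
    have h4 : HasDerivAt (fun t : ℝ => c * t) c t := by
      simpa using (hasDerivAt_id t).const_mul c
    have h3 : HasDerivAt g
        (1 / (1 + (s * A t) ^ 2) * (s * (-a - 2 * (A t) ^ 2)) + c) t := h2.add h4
    have hden : (0:ℝ) < 1 + (s * A t) ^ 2 := by positivity
    have hz : 1 / (1 + (s * A t) ^ 2) * (s * (-a - 2 * (A t) ^ 2)) + c = 0 := by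
      rw [hcas]
      field_simp
      nlinarith [has2, sq_nonneg (A t)]
    rwa [hz] at h3
  have hconst : ∀ t ∈ Set.Icc (0:ℝ) T, g t = g 0 := by
    apply constant_of_has_deriv_right_zero
    · intro t ht; exact (hg t ht).continuousAt.continuousWithinAt
    · intro t ht; exact (hg t (Set.mem_Icc_of_Ico ht)).hasDerivWithinAt
  have hkey : g T = g 0 := hconst T (Set.mem_Icc.mpr ⟨hT0.le, le_refl T⟩)
  have hgT : g T = Real.arctan (s * A_T) + c * T := by simp [hg_def, hAT]
  have hg0 : g 0 = Real.arctan (s * A 0) := by simp [hg_def]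
  have hcT : Real.pi / 2 - Real.arctan (s * A_T) ≤ c * T := by
    have := mul_le_mul_of_nonneg_left hT hc_pos.le
    rwa [← mul_assoc, mul_one_div, div_self (ne_of_gt hc_pos), one_mul] at this
  have hlt : Real.arctan (s * A 0) < Real.pi / 2 := Real.arctan_lt_pi_div_two _
  rw [hgT, hg0] at hkey
  linarith
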